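/- arXiv:2401.07394 — 5 statements merged into one kernel-verified Lean document; each statement's English description precedes it below -/
import Mathlib

section
/- Let m ≥ 1 and k be natural numbers. With (x)_ℓ denoting the rising factorial (Pochhammer symbol) (x)_ℓ = x(x+1)⋯(x+ℓ−1), (x)_0 = 1, one has Σ_{ℓ=0}^{m} [(−m − 1/2)_ℓ (−m)_ℓ (k − m + 1/2)_ℓ] / [(1/2 − m)_ℓ (k − m + 3/2)_ℓ ℓ!] = ((k − m + 1/2)/(k + 1)) · Σ_{ℓ=0}^{m} [(−m − 1/2)_ℓ (−m)_ℓ] / [(1/2 − m)_ℓ ℓ!] + ((m + 1/2)/(k + 1)) · Σ_{ℓ=0}^{m} [(−m)_ℓ (k − m + 1/2)_ℓ] / [(k − m + 3/2)_ℓ ℓ!]. -/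
/-- The rising factorial (Pochhammer symbol) `(x)_n = x (x+1) ⋯ (x+n-1)`, `(x)_0 = 1`. -/
noncomputable def risingFactorial (x : ℝ) (n : ℕ) : ℝ := ∏ i ∈ Finset.range n, (x + i)

lemma rf_key (a : ℝ) (n : ℕ) :
    risingFactorial a n * (a + n) = a * risingFactorial (a + 1) n := by
  unfold risingFactorial
  rw [← Finset.prod_range_succ, Finset.prod_range_succ']
  simp only [Nat.cast_zero, add_zero, Nat.cast_add, Nat.cast_one]
  rw [mul_comm]
  congr 1
  apply Finset.prod_congr rfl
  intro i _
  ring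

lemma half_ne (w : ℤ) : (w : ℝ) + 1/2 ≠ 0 := by
  intro h
  have h2 : ((2 * w + 1 : ℤ) : ℝ) = 0 := by push_cast; linarith
  have : (2 * w + 1 : ℤ) = 0 := by exact_mod_cast h2
  omega

lemma rf_half_ne (z : ℤ) (n : ℕ) : risingFactorial ((z : ℝ) + 1/2) n ≠ 0 := by
  unfold risingFactorial
  apply Finset.prod_ne_zero_iff.2
  intro i _
  have : ((z : ℝ) + 1/2) + i = ((z + i : ℤ) : ℝ) + 1/2 := by push_cast; ring
  rw [this]
  exact half_ne _

/-- Partial-fraction splitting of the terminating `₃F₂(-m-1/2, -m, k-m+1/2; 1/2-m, k-m+3/2; 1)`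
into two `₂F₁(…; 1)` sums. -/
theorem threeF2_splitting (m k : ℕ) (hm : 1 ≤ m) :
    ∑ ℓ ∈ Finset.range (m + 1),
        (risingFactorial (-(m : ℝ) - 1/2) ℓ * risingFactorial (-(m : ℝ)) ℓ *
            risingFactorial ((k : ℝ) - m + 1/2) ℓ) /
          (risingFactorial (1/2 - (m : ℝ)) ℓ * risingFactorial ((k : ℝ) - m + 3/2) ℓ *
            (Nat.factorial ℓ : ℝ)) =
      (((k : ℝ) - m + 1/2) / ((k : ℝ) + 1)) *
          ∑ ℓ ∈ Finset.range (m + 1),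
            (risingFactorial (-(m : ℝ) - 1/2) ℓ * risingFactorial (-(m : ℝ)) ℓ) /
              (risingFactorial (1/2 - (m : ℝ)) ℓ * (Nat.factorial ℓ : ℝ)) +
        (((m : ℝ) + 1/2) / ((k : ℝ) + 1)) *
          ∑ ℓ ∈ Finset.range (m + 1),
            (risingFactorial (-(m : ℝ)) ℓ * risingFactorial ((k : ℝ) - m + 1/2) ℓ) /
              (risingFactorial ((k : ℝ) - m + 3/2) ℓ * (Nat.factorial ℓ : ℝ)) := by
  rw [Finset.mul_sum, Finset.mul_sum, ← Finset.sum_add_distrib]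
  apply Finset.sum_congr rfl
  intro ℓ _
  set a : ℝ := -(m : ℝ) - 1/2 with ha
  set b : ℝ := (k : ℝ) - m + 1/2 with hb
  have ha1 : (1/2 - (m : ℝ)) = a + 1 := by rw [ha]; ring
  have hb1 : ((k : ℝ) - m + 3/2) = b + 1 := by rw [hb]; ring
  have hkey_a := rf_key a ℓ
  have hkey_b := rf_key b ℓ
  have haℓ : a + ℓ ≠ 0 := by
    have : a + ℓ = ((-(m:ℤ) - 1 + ℓ : ℤ) : ℝ) + 1/2 := by rw [ha]; push_cast; ring
    rw [this]; exact half_ne _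
  have hbℓ : b + ℓ ≠ 0 := by
    have : b + ℓ = (((k:ℤ) - m + ℓ : ℤ) : ℝ) + 1/2 := by rw [hb]; push_cast; ring
    rw [this]; exact half_ne _
  have hrfa : risingFactorial (a + 1) ℓ ≠ 0 := by
    have : a + 1 = ((-(m:ℤ) : ℤ) : ℝ) + 1/2 := by rw [ha]; push_cast; ring
    rw [this]; exact rf_half_ne _ _
  have hrfb : risingFactorial (b + 1) ℓ ≠ 0 := by
    have : b + 1 = (((k:ℤ) - m + 1 : ℤ) : ℝ) + 1/2 := by rw [hb]; push_cast; ring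
    rw [this]; exact rf_half_ne _ _
  have hfac : (Nat.factorial ℓ : ℝ) ≠ 0 := by
    exact_mod_cast (Nat.factorial_pos ℓ).ne'
  have hk1 : (k : ℝ) + 1 ≠ 0 := by positivity
  have hA : risingFactorial a ℓ = a * risingFactorial (a + 1) ℓ / (a + ℓ) := by
    field_simp
    linarith [hkey_a]
  have hB : risingFactorial b ℓ = b * risingFactorial (b + 1) ℓ / (b + ℓ) := by
    field_simp
    linarith [hkey_b]
  have hma : ((m : ℝ) + 1/2) = -a := by rw [ha]; ring
  rw [ha1, hb1, hA, hB, hma]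
  have hba : b - a = (k : ℝ) + 1 := by rw [ha, hb]; ring
  field_simp
  ring_nf
  linear_combination (-(a * risingFactorial (-(m:ℝ)) ℓ * b)) * hba
end

section
/- Let m ≥ 1 and k be natural numbers, and set S = Σ_{ℓ=0}^{m} [(−m − 1/2)_ℓ (−m)_ℓ] / [(1/2 − m)_ℓ ℓ!] · 1/(2(k − m + ℓ) + 1) and c = − Σ_{ℓ=0}^{m} [(−m − 1/2)_ℓ (−m)_ℓ] / [(1/2 − m)_ℓ ℓ!], where (x)_ℓ denotes the rising factorial (Pochhammer symbol) (x)_ℓ = x(x+1)⋯(x+ℓ−1), (x)_0 = 1. Then S + c/(2(k + 1)) = (2m + 1) · m! · 2^m / (2(k + 1) · ∏_{j=0}^{m} (2k + 1 − 2j)); in particular S + c/(2(k+1)) ≠ 0. -/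
lemma odd_half_ne_zero (z : ℤ) : 2 * (z : ℝ) + 1 ≠ 0 := by
  intro h
  have h2 : (2 * z + 1 : ℤ) = 0 := by exact_mod_cast h
  omega

lemma rf_shift (a : ℝ) (ℓ : ℕ) :
    risingFactorial a ℓ * (a + ℓ) = a * risingFactorial (a + 1) ℓ := by
  have h1 : risingFactorial a (ℓ + 1) = risingFactorial a ℓ * (a + ℓ) :=
    Finset.prod_range_succ _ _
  have h2 : risingFactorial a (ℓ + 1) = a * risingFactorial (a + 1) ℓ := by
    rw [risingFactorial, Finset.prod_range_succ']
    simp only [Nat.cast_zero, add_zero]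
    rw [mul_comm, risingFactorial]
    congr 1
    exact Finset.prod_congr rfl fun i _ => by push_cast; ring
  rw [← h1, h2]

/-- Partial fraction identity. -/
lemma partial_fractions : ∀ (m : ℕ) (x : ℝ), (∀ j ∈ Finset.range (m + 1), x + j ≠ 0) →
    ∑ ℓ ∈ Finset.range (m + 1), (-1 : ℝ) ^ ℓ * (m.choose ℓ) / (x + ℓ) =
      (Nat.factorial m : ℝ) / ∏ j ∈ Finset.range (m + 1), (x + j) := by
  intro m
  induction m with
  | zero => intro x hx; simp
  | succ n ih =>
    intro x hx
    have hx0 : x ≠ 0 := by simpa using hx 0 (by simp)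
    have hx1 : ∀ j ∈ Finset.range (n + 1), x + j ≠ 0 := by
      intro j hj; exact hx j (Finset.mem_range.mpr (by simp at hj; omega))
    have hx2 : ∀ j ∈ Finset.range (n + 1), (x + 1) + j ≠ 0 := by
      intro j hj
      have := hx (j + 1) (Finset.mem_range.mpr (by simp at hj; omega))
      push_cast at this ⊢
      intro h; apply this; linarith
    have hP1 : (∏ j ∈ Finset.range (n + 1), (x + j)) ≠ 0 :=
      Finset.prod_ne_zero_iff.mpr hx1
    have hP2 : (∏ j ∈ Finset.range (n + 1), ((x + 1) + j)) ≠ 0 :=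
      Finset.prod_ne_zero_iff.mpr hx2
    have key : ∑ ℓ ∈ Finset.range (n + 2), (-1 : ℝ) ^ ℓ * ((n + 1).choose ℓ) / (x + ℓ) =
        (∑ ℓ ∈ Finset.range (n + 1), (-1 : ℝ) ^ ℓ * (n.choose ℓ) / (x + ℓ)) -
          ∑ ℓ ∈ Finset.range (n + 1), (-1 : ℝ) ^ ℓ * (n.choose ℓ) / ((x + 1) + ℓ) := by
      rw [Finset.sum_range_succ' (fun ℓ => (-1 : ℝ) ^ ℓ * ((n + 1).choose ℓ) / (x + ℓ))]
      have e1 : ∑ ℓ ∈ Finset.range (n + 1),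
          (-1 : ℝ) ^ (ℓ + 1) * (((n + 1).choose (ℓ + 1) : ℕ) : ℝ) / (x + ((ℓ + 1 : ℕ) : ℝ)) =
          ∑ ℓ ∈ Finset.range (n + 1),
            ((-1 : ℝ) ^ (ℓ + 1) * ((n.choose (ℓ + 1) : ℕ) : ℝ) / (x + ((ℓ + 1 : ℕ) : ℝ)) -
              (-1 : ℝ) ^ ℓ * ((n.choose ℓ : ℕ) : ℝ) / ((x + 1) + ℓ)) := by
        refine Finset.sum_congr rfl fun ℓ _ => ?_
        rw [Nat.choose_succ_succ']
        push_cast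
        ring
      rw [e1, Finset.sum_sub_distrib]
      have e3 : ∑ ℓ ∈ Finset.range (n + 1), (-1 : ℝ) ^ ℓ * ((n.choose ℓ : ℕ) : ℝ) / (x + ℓ) =
          (∑ ℓ ∈ Finset.range (n + 1),
            (-1 : ℝ) ^ (ℓ + 1) * ((n.choose (ℓ + 1) : ℕ) : ℝ) / (x + ((ℓ + 1 : ℕ) : ℝ))) +
            1 / x := by
        have h4 : ∑ ℓ ∈ Finset.range (n + 2), (-1 : ℝ) ^ ℓ * ((n.choose ℓ : ℕ) : ℝ) / (x + ℓ) =
            ∑ ℓ ∈ Finset.range (n + 1), (-1 : ℝ) ^ ℓ * ((n.choose ℓ : ℕ) : ℝ) / (x + ℓ) := by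
          rw [Finset.sum_range_succ, Nat.choose_succ_self]
          simp
        rw [← h4, Finset.sum_range_succ' (fun ℓ => (-1 : ℝ) ^ ℓ * ((n.choose ℓ : ℕ) : ℝ) / (x + ℓ))]
        simp
      rw [e3]
      simp
      ring
    rw [key, ih x hx1, ih (x + 1) hx2]
    have hQ1 : ∏ j ∈ Finset.range (n + 2), (x + j) =
        (∏ j ∈ Finset.range (n + 1), (x + j)) * (x + ((n + 1 : ℕ) : ℝ)) :=
      Finset.prod_range_succ _ _
    have hQ2 : ∏ j ∈ Finset.range (n + 2), (x + j) =
        x * ∏ j ∈ Finset.range (n + 1), ((x + 1) + j) := by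
      rw [Finset.prod_range_succ' (fun j => x + (j : ℝ))]
      simp only [Nat.cast_zero, add_zero]
      rw [mul_comm]
      congr 1
      exact Finset.prod_congr rfl fun i _ => by push_cast; ring
    have hrel : ∏ j ∈ Finset.range (n + 1), ((x + 1) + j) =
        (∏ j ∈ Finset.range (n + 1), (x + j)) * (x + ((n + 1 : ℕ) : ℝ)) / x := by
      rw [eq_div_iff hx0, mul_comm _ x, ← hQ2, hQ1]
    have hxn1 : x + ((n + 1 : ℕ) : ℝ) ≠ 0 := hx (n + 1) (Finset.mem_range.mpr (by omega))
    rw [hrel, hQ1, Nat.factorial_succ]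
    push_cast at hxn1 ⊢
    field_simp
    ring

/-- The finite part `I_{k,m} = S + c/(2(k+1))` equals
`(2m+1) m! 2^m / (2(k+1) ∏_{j=0}^m (2k+1-2j))`; in particular it is nonzero. -/
theorem finite_part_value_nonzero (m k : ℕ) (hm : 1 ≤ m) (S c : ℝ)
    (hS : S = ∑ ℓ ∈ Finset.range (m + 1),
        (risingFactorial (-(m : ℝ) - 1/2) ℓ * risingFactorial (-(m : ℝ)) ℓ) /
            (risingFactorial (1/2 - (m : ℝ)) ℓ * (Nat.factorial ℓ : ℝ)) *
          (1 / (2 * ((k : ℝ) - m + ℓ) + 1)))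
    (hc : c = -∑ ℓ ∈ Finset.range (m + 1),
        (risingFactorial (-(m : ℝ) - 1/2) ℓ * risingFactorial (-(m : ℝ)) ℓ) /
          (risingFactorial (1/2 - (m : ℝ)) ℓ * (Nat.factorial ℓ : ℝ))) :
    S + c / (2 * ((k : ℝ) + 1)) =
      (2 * (m : ℝ) + 1) * (Nat.factorial m : ℝ) * 2 ^ m /
        (2 * ((k : ℝ) + 1) * ∏ j ∈ Finset.range (m + 1), (2 * (k : ℝ) + 1 - 2 * (j : ℝ))) ∧
    S + c / (2 * ((k : ℝ) + 1)) ≠ 0 := by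
  -- nonzeroness of the shifted points
  have hxj : ∀ j ∈ Finset.range (m + 1), ((k : ℝ) - m + 1/2) + j ≠ 0 := by
    intro j _
    have h := odd_half_ne_zero ((k : ℤ) - m + j)
    intro h0; apply h; push_cast; linarith
  have hP : (∏ j ∈ Finset.range (m + 1), (((k : ℝ) - m + 1/2) + j)) ≠ 0 :=
    Finset.prod_ne_zero_iff.mpr hxj
  have hk1 : (2 : ℝ) * ((k : ℝ) + 1) ≠ 0 := by positivity
  -- the key rewriting of each summand
  have hterm : ∀ ℓ ∈ Finset.range (m + 1),
      (risingFactorial (-(m : ℝ) - 1/2) ℓ * risingFactorial (-(m : ℝ)) ℓ) /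
            (risingFactorial (1/2 - (m : ℝ)) ℓ * (Nat.factorial ℓ : ℝ)) *
          (1 / (2 * ((k : ℝ) - m + ℓ) + 1)) -
        (risingFactorial (-(m : ℝ) - 1/2) ℓ * risingFactorial (-(m : ℝ)) ℓ) /
          (risingFactorial (1/2 - (m : ℝ)) ℓ * (Nat.factorial ℓ : ℝ)) /
          (2 * ((k : ℝ) + 1)) =
      (2 * (m : ℝ) + 1) / (4 * ((k : ℝ) + 1)) *
        ((-1 : ℝ) ^ ℓ * (m.choose ℓ) / (((k : ℝ) - m + 1/2) + ℓ)) := by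
    intro ℓ hℓ
    have hℓm : ℓ ≤ m := by simp at hℓ; omega
    -- nonvanishing facts
    have hRF3 : risingFactorial (1/2 - (m : ℝ)) ℓ ≠ 0 := by
      rw [risingFactorial]
      refine Finset.prod_ne_zero_iff.mpr fun i _ => ?_
      have h := odd_half_ne_zero ((i : ℤ) - m)
      intro h0; apply h; push_cast; linarith
    have haℓ : (-(m : ℝ) - 1/2) + ℓ ≠ 0 := by
      have h := odd_half_ne_zero ((ℓ : ℤ) - m - 1)
      intro h0; apply h; push_cast; linarith
    have hden : 2 * ((k : ℝ) - m + ℓ) + 1 ≠ 0 := by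
      have h := odd_half_ne_zero ((k : ℤ) - m + ℓ)
      intro h0; apply h; push_cast; linarith
    have hxℓ : ((k : ℝ) - m + 1/2) + ℓ ≠ 0 := by
      have h := odd_half_ne_zero ((k : ℤ) - m + ℓ)
      intro h0; apply h; push_cast; linarith
    have hfac : (Nat.factorial ℓ : ℝ) ≠ 0 := by
      exact_mod_cast Nat.factorial_ne_zero ℓ
    -- F2 : rising factorial at -m
    have hF2 : risingFactorial (-(m : ℝ)) ℓ =
        (-1 : ℝ) ^ ℓ * ((Nat.factorial ℓ : ℝ) * (m.choose ℓ : ℝ)) := by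
      rw [risingFactorial]
      have e1 : ∏ i ∈ Finset.range ℓ, (-(m : ℝ) + i) =
          ∏ i ∈ Finset.range ℓ, ((-1) * ((m : ℝ) - i)) :=
        Finset.prod_congr rfl fun i _ => by ring
      rw [e1, Finset.prod_mul_distrib, Finset.prod_const]
      have e2 : ∏ i ∈ Finset.range ℓ, ((m : ℝ) - i) =
          ((m.descFactorial ℓ : ℕ) : ℝ) := by
        rw [Nat.descFactorial_eq_prod_range, Nat.cast_prod]
        refine Finset.prod_congr rfl fun i hi => ?_
        have hi' : i ≤ m := le_trans (le_of_lt (Finset.mem_range.mp hi)) hℓm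
        rw [Nat.cast_sub hi']
      rw [e2, Nat.descFactorial_eq_factorial_mul_choose, Finset.card_range]
      push_cast
      ring
    -- F1 : rising factorial at -m-1/2 via the shift identity
    have hF1 : risingFactorial (-(m : ℝ) - 1/2) ℓ =
        (-(m : ℝ) - 1/2) * risingFactorial (1/2 - (m : ℝ)) ℓ / ((-(m : ℝ) - 1/2) + ℓ) := by
      rw [eq_div_iff haℓ]
      have := rf_shift (-(m : ℝ) - 1/2) ℓ
      have h15 : (-(m : ℝ) - 1/2 + 1) = 1/2 - (m : ℝ) := by ring
      rw [h15] at this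
      exact this
    have hq : (risingFactorial (-(m : ℝ) - 1/2) ℓ * risingFactorial (-(m : ℝ)) ℓ) /
        (risingFactorial (1/2 - (m : ℝ)) ℓ * (Nat.factorial ℓ : ℝ)) =
        (-(m : ℝ) - 1/2) / ((-(m : ℝ) - 1/2) + ℓ) * ((-1 : ℝ) ^ ℓ * (m.choose ℓ : ℝ)) := by
      rw [hF1, hF2, div_mul_eq_mul_div, div_div, div_mul_eq_mul_div,
        div_eq_div_iff (mul_ne_zero haℓ (mul_ne_zero hRF3 hfac)) haℓ]
      ring
    rw [hq, div_mul_eq_mul_div, mul_one_div, div_div, div_div,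
      div_sub_div _ _ (mul_ne_zero haℓ hden) (mul_ne_zero haℓ hk1),
      div_mul_div_comm,
      div_eq_div_iff
        (mul_ne_zero (mul_ne_zero haℓ hden) (mul_ne_zero haℓ hk1))
        (mul_ne_zero (by positivity) hxℓ)]
    ring
  -- assemble the sum
  have hmain : S + c / (2 * ((k : ℝ) + 1)) =
      (2 * (m : ℝ) + 1) / (4 * ((k : ℝ) + 1)) *
        ((Nat.factorial m : ℝ) / ∏ j ∈ Finset.range (m + 1), (((k : ℝ) - m + 1/2) + j)) := by
    rw [hS, hc, neg_div, ← sub_eq_add_neg, Finset.sum_div, ← Finset.sum_sub_distrib,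
      Finset.sum_congr rfl hterm, ← Finset.mul_sum,
      partial_fractions m ((k : ℝ) - m + 1/2) hxj]
  -- relate the two products
  have hprod : ∏ j ∈ Finset.range (m + 1), (2 * (k : ℝ) + 1 - 2 * (j : ℝ)) =
      2 ^ (m + 1) * ∏ j ∈ Finset.range (m + 1), (((k : ℝ) - m + 1/2) + j) := by
    have hrefl := (Finset.prod_range_reflect (fun j => 2 * (k : ℝ) + 1 - 2 * (j : ℝ)) (m + 1)).symm
    simp only [Nat.add_sub_cancel] at hrefl
    rw [hrefl]
    have e : ∀ j ∈ Finset.range (m + 1),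
        2 * (k : ℝ) + 1 - 2 * (((m - j : ℕ) : ℕ) : ℝ) = 2 * (((k : ℝ) - m + 1/2) + j) := by
      intro j hj
      have hj' : j ≤ m := by simp at hj; omega
      rw [Nat.cast_sub hj']
      push_cast
      ring
    rw [Finset.prod_congr rfl e, Finset.prod_mul_distrib, Finset.prod_const,
      Finset.card_range]
  constructor
  · rw [hmain, hprod, div_mul_div_comm,
      div_eq_div_iff (mul_ne_zero (by positivity) hP)
        (mul_ne_zero hk1 (mul_ne_zero (by positivity) hP))]
    ring
  · rw [hmain]
    apply mul_ne_zero
    · apply div_ne_zero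
      · positivity
      · positivity
    · apply div_ne_zero
      · exact_mod_cast Nat.factorial_ne_zero m
      · exact hP
end

section
/- Let m ≥ 1 and k be natural numbers with k ≥ m, and define the polynomial P(x) = Σ_{ℓ=0}^{m} [(−m − 1/2)_ℓ (−m)_ℓ] / [(1/2 − m)_ℓ ℓ!] · x^{2ℓ}, where (x)_ℓ denotes the rising factorial (Pochhammer symbol) (x)_ℓ = x(x+1)⋯(x+ℓ−1), (x)_0 = 1. Then ∫₀¹ x^{2k−2m} (P(x) − P(1) · x^{2m+1}) dx = (2m + 1) · m! · 2^m / (2(k + 1) · ∏_{j=0}^{m} (2k + 1 − 2j)), and this value is nonzero. -/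
open MeasureTheory intervalIntegral

lemma rf_succ (x : ℝ) (n : ℕ) :
    risingFactorial x (n + 1) = risingFactorial x n * (x + n) := by
  simp [risingFactorial, Finset.prod_range_succ]

lemma rf_zero (x : ℝ) : risingFactorial x 0 = 1 := by simp [risingFactorial]

lemma rf_neg_nat (m : ℕ) : ∀ ℓ, ℓ ≤ m →
    risingFactorial (-(m : ℝ)) ℓ = (-1) ^ ℓ * (Nat.factorial ℓ : ℝ) * (m.choose ℓ : ℝ) := by
  intro ℓ
  induction ℓ with
  | zero => intro _; simp [rf_zero]
  | succ n ih =>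
    intro h
    have hn : n ≤ m := Nat.le_of_succ_le h
    have hc := Nat.choose_succ_right_eq m n
    have hc' : (m.choose (n+1) : ℝ) * ((n:ℝ)+1) = (m.choose n : ℝ) * ((m : ℝ) - n) := by
      have := congrArg (Nat.cast : ℕ → ℝ) hc
      push_cast [Nat.cast_sub hn] at this
      linarith [this]
    rw [rf_succ, ih hn, Nat.factorial_succ]
    push_cast
    linear_combination ((-1:ℝ)) ^ n * (Nat.factorial n : ℝ) * hc'

lemma rf_ratio (m : ℕ) : ∀ ℓ : ℕ,
    risingFactorial (-(m : ℝ) - 1/2) ℓ * (2*(m:ℝ)+1-2*ℓ)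
      = (2*(m:ℝ)+1) * risingFactorial (1/2 - (m : ℝ)) ℓ := by
  intro ℓ
  induction ℓ with
  | zero => simp [rf_zero]
  | succ n ih =>
    rw [rf_succ, rf_succ]
    push_cast
    linear_combination (1/2 - (m:ℝ) + n) * ih

lemma rf_half_ne_s12 (m ℓ : ℕ) : risingFactorial (1/2 - (m : ℝ)) ℓ ≠ 0 := by
  rw [risingFactorial]
  apply Finset.prod_ne_zero_iff.mpr
  intro i _ h
  have h2 : (2*i+1 : ℝ) = 2*m := by linarith
  have h3 : 2*i+1 = 2*m := by exact_mod_cast h2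
  omega

lemma coeff_eq (m ℓ : ℕ) (h : ℓ ≤ m) :
    risingFactorial (-(m : ℝ) - 1/2) ℓ * risingFactorial (-(m : ℝ)) ℓ /
      (risingFactorial (1/2 - (m : ℝ)) ℓ * (Nat.factorial ℓ : ℝ))
    = (-1:ℝ)^ℓ * (m.choose ℓ : ℝ) * (2*(m:ℝ)+1) / (2*(m:ℝ)+1-2*(ℓ:ℝ)) := by
  have hB := rf_half_ne_s12 m ℓ
  have hfac : (Nat.factorial ℓ : ℝ) ≠ 0 := by
    exact_mod_cast (Nat.factorial_pos ℓ).ne'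
  have hl : (ℓ:ℝ) ≤ m := by exact_mod_cast h
  have hden : (2*(m:ℝ)+1-2*(ℓ:ℝ)) ≠ 0 := by linarith
  have hratio := rf_ratio m ℓ
  rw [rf_neg_nat m ℓ h, div_eq_div_iff (mul_ne_zero hB hfac) hden]
  linear_combination ((-1:ℝ)^ℓ * (Nat.factorial ℓ : ℝ) * (m.choose ℓ : ℝ)) * hratio

lemma sum_rec (m : ℕ) (x : ℝ) (hx : 0 < x) :
    ∑ ℓ ∈ Finset.range (m + 2), (-1:ℝ)^ℓ * (((m+1).choose ℓ : ℕ) : ℝ) / (x + ℓ)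
      = (∑ ℓ ∈ Finset.range (m + 1), (-1:ℝ)^ℓ * ((m.choose ℓ : ℕ) : ℝ) / (x + ℓ))
        - ∑ ℓ ∈ Finset.range (m + 1), (-1:ℝ)^ℓ * ((m.choose ℓ : ℕ) : ℝ) / (x + 1 + ℓ) := by
  set g : ℕ → ℝ := fun j => (-1:ℝ)^j * ((m.choose j : ℕ) : ℝ) / (x + j) with hg
  have e1 := Finset.sum_range_succ' g (m+1)
  have e2 := Finset.sum_range_succ g (m+1)
  have hg0 : g (m+1) = 0 := by simp [hg, Nat.choose_succ_self]
  have eshift : ∑ ℓ ∈ Finset.range (m+1), g (ℓ+1)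
      = (∑ ℓ ∈ Finset.range (m+1), g ℓ) - g 0 := by
    linarith [e1, e2, hg0]
  rw [Finset.sum_range_succ' (fun ℓ => (-1:ℝ)^ℓ * (((m+1).choose ℓ : ℕ) : ℝ) / (x + ℓ)) (m+1)]
  have hsplit : ∀ ℓ ∈ Finset.range (m+1),
      (-1:ℝ)^(ℓ+1) * (((m+1).choose (ℓ+1) : ℕ) : ℝ) / (x + ((ℓ+1 : ℕ) : ℝ))
        = g (ℓ+1) + (-((-1:ℝ)^ℓ * ((m.choose ℓ : ℕ) : ℝ) / (x + 1 + ℓ))) := by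
    intro ℓ _
    rw [Nat.choose_succ_succ]
    have hxl : x + ((ℓ:ℝ) + 1) ≠ 0 := by positivity
    simp only [hg]
    push_cast
    field_simp
    ring
  rw [Finset.sum_congr rfl hsplit, Finset.sum_add_distrib, eshift, Finset.sum_neg_distrib]
  simp only [hg, Nat.choose_zero_right, Nat.cast_one]
  push_cast
  ring

lemma key_sum : ∀ (m : ℕ), ∀ (x : ℝ), 0 < x →
    ∑ ℓ ∈ Finset.range (m + 1), (-1:ℝ)^ℓ * ((m.choose ℓ : ℕ) : ℝ) / (x + ℓ)
      = (Nat.factorial m : ℝ) / ∏ i ∈ Finset.range (m + 1), (x + (i:ℝ)) := by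
  intro m
  induction m with
  | zero => intro x hx; simp
  | succ m ih =>
    intro x hx
    have hx1 : (0:ℝ) < x + 1 := by linarith
    set A := ∏ i ∈ Finset.range (m + 1), (x + (i:ℝ)) with hAdef
    set B := ∏ i ∈ Finset.range (m + 1), (x + 1 + (i:ℝ)) with hBdef
    have hA : (0:ℝ) < A := by
      rw [hAdef]; apply Finset.prod_pos; intro i _; positivity
    have hB : (0:ℝ) < B := by
      rw [hBdef]; apply Finset.prod_pos; intro i _; positivity
    have hC1 : ∏ i ∈ Finset.range (m + 2), (x + (i:ℝ)) = A * (x + ((m:ℝ)+1)) := by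
      rw [hAdef, Finset.prod_range_succ]; push_cast; ring
    have hC2 : ∏ i ∈ Finset.range (m + 2), (x + (i:ℝ)) = x * B := by
      rw [Finset.prod_range_succ' (fun i => x + (i:ℝ)) (m+1),
        Finset.prod_congr rfl (fun i (_ : i ∈ Finset.range (m+1)) =>
          show x + ((i+1 : ℕ):ℝ) = x + 1 + (i:ℝ) by push_cast; ring)]
      rw [hBdef]
      push_cast
      ring
    have hkey : x * B = A * (x + ((m:ℝ)+1)) := by rw [← hC2, hC1]
    rw [sum_rec m x hx, ih x hx, ih (x+1) hx1, hC1, Nat.factorial_succ]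
    push_cast
    rw [div_sub_div _ _ hA.ne' hB.ne', div_eq_div_iff (by positivity) (by positivity)]
    linear_combination ((Nat.factorial m : ℝ)) * A * hkey

lemma term_alg (K M L c : ℝ) (hL : 0 ≤ L) (hML : L ≤ M) (hKM : M ≤ K) :
    c * (2*M+1) / (2*M+1-2*L) * (1 / (2*K - 2*M + 2*L + 1) - 1 / (2*K + 2))
      = (2*M+1) / (2 * (2*K+2)) * (c / (K - M + 1/2 + L)) := by
  have d1 : (2*M+1-2*L) ≠ 0 := by
    have : (0:ℝ) < 2*M+1-2*L := by linarith
    exact this.ne'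
  have d2 : (2*K - 2*M + 2*L + 1) ≠ 0 := by
    have : (0:ℝ) < 2*K - 2*M + 2*L + 1 := by linarith
    exact this.ne'
  have d3 : (2*K + 2) ≠ 0 := by
    have : (0:ℝ) < 2*K + 2 := by linarith
    exact this.ne'
  have d4 : (K - M + 1/2 + L) ≠ 0 := by
    have : (0:ℝ) < K - M + 1/2 + L := by linarith
    exact this.ne'
  rw [div_sub_div _ _ d2 d3, div_mul_div_comm, div_mul_div_comm,
    div_eq_div_iff (mul_ne_zero d1 (mul_ne_zero d2 d3))
      (mul_ne_zero (mul_ne_zero two_ne_zero d3) d4)]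
  ring

set_option maxHeartbeats 1000000 in
/-- For `k ≥ m`, `∫₀¹ x^(2k-2m) (P(x) - P(1) x^(2m+1)) dx
= (2m+1) m! 2^m / (2(k+1) ∏_{j=0}^m (2k+1-2j)) ≠ 0`, where `P` is the terminating
hypergeometric polynomial `₂F₁(-m, -m-1/2; 1/2-m; x²)`. -/
theorem integral_hypergeometric_polynomial (m k : ℕ) (hm : 1 ≤ m) (hk : m ≤ k)
    (P : ℝ → ℝ)
    (hP : ∀ x : ℝ, P x = ∑ ℓ ∈ Finset.range (m + 1),
        (risingFactorial (-(m : ℝ) - 1/2) ℓ * risingFactorial (-(m : ℝ)) ℓ) /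
            (risingFactorial (1/2 - (m : ℝ)) ℓ * (Nat.factorial ℓ : ℝ)) * x ^ (2 * ℓ)) :
    (∫ x in (0:ℝ)..1, x ^ (2 * k - 2 * m) * (P x - P 1 * x ^ (2 * m + 1))) =
      (2 * (m : ℝ) + 1) * (Nat.factorial m : ℝ) * 2 ^ m /
        (2 * ((k : ℝ) + 1) * ∏ j ∈ Finset.range (m + 1), (2 * (k : ℝ) + 1 - 2 * (j : ℝ))) ∧
    (∫ x in (0:ℝ)..1, x ^ (2 * k - 2 * m) * (P x - P 1 * x ^ (2 * m + 1))) ≠ 0 := by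
  have hmk : (m:ℝ) ≤ (k:ℝ) := by exact_mod_cast hk
  have h2 : 2 * m ≤ 2 * k := by omega
  set x₀ : ℝ := (k:ℝ) - (m:ℝ) + 1/2 with hx₀def
  have hx0 : 0 < x₀ := by rw [hx₀def]; linarith
  set Q : ℝ := ∏ i ∈ Finset.range (m + 1), (x₀ + (i:ℝ)) with hQdef
  have hQ : 0 < Q := by
    rw [hQdef]; apply Finset.prod_pos; intro i _; positivity
  -- step 1: pointwise rewrite of the integrand
  have hP1 : ∀ x : ℝ, x ^ (2 * k - 2 * m) * (P x - P 1 * x ^ (2 * m + 1))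
      = ∑ ℓ ∈ Finset.range (m + 1),
          (risingFactorial (-(m : ℝ) - 1/2) ℓ * risingFactorial (-(m : ℝ)) ℓ /
            (risingFactorial (1/2 - (m : ℝ)) ℓ * (Nat.factorial ℓ : ℝ)))
          * (x ^ (2 * k - 2 * m + 2 * ℓ) - x ^ (2 * k - 2 * m + (2 * m + 1))) := by
    intro x
    rw [hP x, hP 1]
    simp only [one_pow, mul_one]
    rw [Finset.sum_mul, ← Finset.sum_sub_distrib, Finset.mul_sum]
    refine Finset.sum_congr rfl fun ℓ _ => ?_
    rw [pow_add, pow_add]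
    ring
  -- step 2: compute the integral termwise
  have hI : (∫ x in (0:ℝ)..1, x ^ (2 * k - 2 * m) * (P x - P 1 * x ^ (2 * m + 1)))
      = ∑ ℓ ∈ Finset.range (m + 1),
          (risingFactorial (-(m : ℝ) - 1/2) ℓ * risingFactorial (-(m : ℝ)) ℓ /
            (risingFactorial (1/2 - (m : ℝ)) ℓ * (Nat.factorial ℓ : ℝ)))
          * (1 / (2*(k:ℝ) - 2*(m:ℝ) + 2*(ℓ:ℝ) + 1) - 1 / (2*(k:ℝ) + 2)) := by
    simp only [hP1]
    rw [intervalIntegral.integral_finset_sum]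
    · refine Finset.sum_congr rfl fun ℓ _ => ?_
      rw [intervalIntegral.integral_const_mul,
        intervalIntegral.integral_sub ((continuous_pow _).intervalIntegrable 0 1)
          ((continuous_pow _).intervalIntegrable 0 1),
        integral_pow, integral_pow]
      have e1 : ((2 * k - 2 * m + 2 * ℓ : ℕ) : ℝ) + 1
          = 2*(k:ℝ) - 2*(m:ℝ) + 2*(ℓ:ℝ) + 1 := by
        rw [Nat.cast_add, Nat.cast_sub h2]; push_cast; ring
      have e2 : ((2 * k - 2 * m + (2 * m + 1) : ℕ) : ℝ) + 1 = 2*(k:ℝ) + 2 := by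
        rw [show 2 * k - 2 * m + (2 * m + 1) = 2 * k + 1 from by omega]; push_cast; ring
      rw [e1, e2]
      norm_num
    · intro ℓ _
      exact Continuous.intervalIntegrable (by continuity) 0 1
  -- step 3: per-term algebraic simplification
  have hterm : ∀ ℓ ∈ Finset.range (m + 1),
      (risingFactorial (-(m : ℝ) - 1/2) ℓ * risingFactorial (-(m : ℝ)) ℓ /
        (risingFactorial (1/2 - (m : ℝ)) ℓ * (Nat.factorial ℓ : ℝ)))
        * (1 / (2*(k:ℝ) - 2*(m:ℝ) + 2*(ℓ:ℝ) + 1) - 1 / (2*(k:ℝ) + 2))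
      = (2*(m:ℝ)+1) / (2 * (2*(k:ℝ)+2))
          * ((-1:ℝ)^ℓ * ((m.choose ℓ : ℕ) : ℝ) / (x₀ + (ℓ:ℝ))) := by
    intro ℓ hℓ
    have hℓm : ℓ ≤ m := Nat.lt_succ_iff.mp (Finset.mem_range.mp hℓ)
    have hℓr : (ℓ:ℝ) ≤ (m:ℝ) := by exact_mod_cast hℓm
    rw [coeff_eq m ℓ hℓm, hx₀def]
    exact term_alg (k:ℝ) (m:ℝ) (ℓ:ℝ) ((-1:ℝ)^ℓ * ((m.choose ℓ : ℕ) : ℝ))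
      (Nat.cast_nonneg ℓ) hℓr hmk
  have hprodid : ∏ j ∈ Finset.range (m + 1), (2 * (k:ℝ) + 1 - 2 * (j:ℝ))
      = 2^(m+1) * Q := by
    rw [← Finset.prod_range_reflect (fun j => 2 * (k:ℝ) + 1 - 2 * (j:ℝ)) (m+1)]
    have hcong : ∀ j ∈ Finset.range (m + 1),
        2 * (k:ℝ) + 1 - 2 * ((m + 1 - 1 - j : ℕ) : ℝ) = 2 * (x₀ + (j:ℝ)) := by
      intro j hj
      have hjm : j ≤ m := Nat.lt_succ_iff.mp (Finset.mem_range.mp hj)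
      rw [show m + 1 - 1 - j = m - j from by omega, Nat.cast_sub hjm, hx₀def]
      ring
    rw [Finset.prod_congr rfl hcong, Finset.prod_mul_distrib, Finset.prod_const,
      Finset.card_range, hQdef]
  have hval : (∫ x in (0:ℝ)..1, x ^ (2 * k - 2 * m) * (P x - P 1 * x ^ (2 * m + 1)))
      = (2 * (m : ℝ) + 1) * (Nat.factorial m : ℝ) * 2 ^ m /
        (2 * ((k : ℝ) + 1) * ∏ j ∈ Finset.range (m + 1), (2 * (k : ℝ) + 1 - 2 * (j : ℝ))) := by
    rw [hI, Finset.sum_congr rfl hterm, ← Finset.mul_sum, key_sum m x₀ hx0, ← hQdef, hprodid]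
    have d3 : (2*(k:ℝ) + 2) ≠ 0 := by positivity
    have dk : ((k:ℝ) + 1) ≠ 0 := by positivity
    field_simp
    ring
  refine ⟨hval, ?_⟩
  rw [hval]
  apply ne_of_gt
  apply div_pos
  · have hf : (0:ℝ) < (Nat.factorial m : ℝ) := by exact_mod_cast m.factorial_pos
    positivity
  · apply mul_pos (by positivity : (0:ℝ) < 2 * ((k:ℝ) + 1))
    apply Finset.prod_pos
    intro j hj
    have hjm : (j:ℝ) ≤ (m:ℝ) := by
      exact_mod_cast Nat.lt_succ_iff.mp (Finset.mem_range.mp hj)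
    linarith
end

section
/- Let m ≥ 1 and k be natural numbers. Then, in the rational numbers, 2(k − m) · (−2)^m / ∏_{j=1}^{m} (2j − 1) + (2m + 1) · 2^m / ∏_{j=0}^{m−1} (2k + 1 − 2j) ≠ 0 (here k − m is taken as an integer, possibly negative). -/
/-- Nonvanishing by a 2-adic parity argument:
`2(k-m) (-2)^m / ∏_{j=1}^m (2j-1) + (2m+1) 2^m / ∏_{j=0}^{m-1} (2k+1-2j) ≠ 0` in `ℚ`. -/
theorem two_adic_nonvanishing (m k : ℕ) (hm : 1 ≤ m) :
    2 * ((k : ℚ) - (m : ℚ)) * (-2) ^ m / (∏ j ∈ Finset.Icc 1 m, (2 * (j : ℚ) - 1)) +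
        (2 * (m : ℚ) + 1) * 2 ^ m / (∏ j ∈ Finset.range m, (2 * (k : ℚ) + 1 - 2 * (j : ℚ))) ≠
      0 := by
  set P : ℤ := ∏ j ∈ Finset.Icc 1 m, (2 * (j : ℤ) - 1) with hPdef
  set Q : ℤ := ∏ j ∈ Finset.range m, (2 * (k : ℤ) + 1 - 2 * (j : ℤ)) with hQdef
  have hp2 : Prime (2 : ℤ) := Int.prime_two
  have hoddP : Odd P := by
    rw [← Int.not_even_iff_odd, even_iff_two_dvd, hPdef, Prime.dvd_finset_prod_iff hp2]
    rintro ⟨j, _, hj⟩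
    omega
  have hoddQ : Odd Q := by
    rw [← Int.not_even_iff_odd, even_iff_two_dvd, hQdef, Prime.dvd_finset_prod_iff hp2]
    rintro ⟨j, _, hj⟩
    omega
  have hP0 : P ≠ 0 := fun h => by simp [h] at hoddP
  have hQ0 : Q ≠ 0 := fun h => by simp [h] at hoddQ
  set N : ℤ := 2 * ((k : ℤ) - (m : ℤ)) * (-1) ^ m * Q + (2 * (m : ℤ) + 1) * P with hNdef
  have hoddN : Odd N := by
    have h1 : Even (2 * ((k : ℤ) - (m : ℤ)) * (-1) ^ m * Q) := ⟨((k : ℤ) - m) * (-1) ^ m * Q, by ring⟩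
    have h2 : Odd ((2 * (m : ℤ) + 1) * P) := Odd.mul (⟨m, by ring⟩ : Odd (2 * (m : ℤ) + 1)) hoddP
    exact h1.add_odd h2
  have hN0 : N ≠ 0 := fun h => by simp [h] at hoddN
  have hPQ : (∏ j ∈ Finset.Icc 1 m, (2 * (j : ℚ) - 1)) = (P : ℚ) := by push_cast [hPdef]; ring
  have hQQ : (∏ j ∈ Finset.range m, (2 * (k : ℚ) + 1 - 2 * (j : ℚ))) = (Q : ℚ) := by
    push_cast [hQdef]; ring
  rw [hPQ, hQQ]
  have hP0' : (P : ℚ) ≠ 0 := Int.cast_ne_zero.mpr hP0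
  have hQ0' : (Q : ℚ) ≠ 0 := Int.cast_ne_zero.mpr hQ0
  have key : 2 * ((k : ℚ) - (m : ℚ)) * (-2) ^ m / (P : ℚ) +
      (2 * (m : ℚ) + 1) * 2 ^ m / (Q : ℚ) = 2 ^ m * (N : ℚ) / ((P : ℚ) * (Q : ℚ)) := by
    rw [hNdef]
    push_cast
    rw [show ((-2 : ℚ)) = (-1) * 2 by norm_num, mul_pow]
    field_simp
  rw [key]
  exact div_ne_zero (mul_ne_zero (pow_ne_zero _ two_ne_zero) (Int.cast_ne_zero.mpr hN0)) (mul_ne_zero hP0' hQ0')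
end

section
/- Define B : [0,1] → ℝ by B(x) = (1 − x)(2x + 1)/(1 + x). Then B(0) = 1, B(1) = 0, and for every x ∈ (0,1), (x − x³) · B''(x) − 2 · B'(x) − (4x/(1 − x²)) · B(x) = 0. -/
/-- The explicit radial solution of the hemisphere Jacobi ODE for `m* = 1`, `k = 2`. -/
noncomputable def B : ℝ → ℝ := fun x => (1 - x) * (2 * x + 1) / (1 + x)

lemma hB_deriv (x : ℝ) (hx : (1:ℝ) + x ≠ 0) :
    HasDerivAt B ((-2 * x ^ 2 - 4 * x) / (1 + x) ^ 2) x := by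
  have h1 : HasDerivAt (fun x : ℝ => (1 - x) * (2 * x + 1)) (-4 * x + 1) x := by
    have := ((hasDerivAt_id x).const_sub 1).mul
      (((hasDerivAt_id x).const_mul 2).add_const 1)
    refine this.congr_deriv ?_
    simp [id_eq]; ring
  have h2 : HasDerivAt (fun x : ℝ => 1 + x) 1 x := (hasDerivAt_id x).const_add 1
  have := h1.div h2 hx
  refine this.congr_deriv ?_
  field_simp
  ring

lemma hB_deriv_eq (x : ℝ) (hx : (1:ℝ) + x ≠ 0) :
    deriv B x = (-2 * x ^ 2 - 4 * x) / (1 + x) ^ 2 :=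
  (hB_deriv x hx).deriv

lemma hB'_deriv (x : ℝ) (hx : (1:ℝ) + x ≠ 0) :
    HasDerivAt (fun x : ℝ => (-2 * x ^ 2 - 4 * x) / (1 + x) ^ 2)
      (-4 / (1 + x) ^ 3) x := by
  have h1 : HasDerivAt (fun x : ℝ => -2 * x ^ 2 - 4 * x) (-4 * x - 4) x := by
    have := (((hasDerivAt_pow 2 x).const_mul (-2)).sub ((hasDerivAt_id x).const_mul 4))
    refine this.congr_deriv ?_
    ring
  have h2 : HasDerivAt (fun x : ℝ => (1 + x) ^ 2) (2 * (1 + x)) x := by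
    have := (((hasDerivAt_id x).const_add 1).pow 2)
    refine this.congr_deriv ?_
    simp [id_eq]
  have hden : ((1:ℝ) + x) ^ 2 ≠ 0 := pow_ne_zero _ hx
  have := h1.div h2 hden
  refine this.congr_deriv ?_
  field_simp
  ring

/-- `B(x) = (1-x)(2x+1)/(1+x)` satisfies `B(0) = 1`, `B(1) = 0`, and the ODE
`(x - x³) B'' - 2 B' - (4x/(1-x²)) B = 0` on `(0,1)`. -/
theorem jacobi_ode_solution_dim_two :
    B 0 = 1 ∧ B 1 = 0 ∧ ∀ x ∈ Set.Ioo (0 : ℝ) 1,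
      (x - x ^ 3) * deriv (deriv B) x - 2 * deriv B x - (4 * x / (1 - x ^ 2)) * B x = 0 := by
  refine ⟨by norm_num [B], by norm_num [B], ?_⟩
  intro x hx
  obtain ⟨hx0, hx1⟩ := hx
  have hx' : (1:ℝ) + x ≠ 0 := by linarith
  have hopen : ∀ᶠ y in nhds x, deriv B y = (-2 * y ^ 2 - 4 * y) / (1 + y) ^ 2 := by
    have : ∀ᶠ y in nhds x, (1:ℝ) + y ≠ 0 := by
      have : Set.Ioi (-1 : ℝ) ∈ nhds x := Ioi_mem_nhds (by linarith)
      filter_upwards [this] with y hy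
      simp only [Set.mem_Ioi] at hy
      linarith
    filter_upwards [this] with y hy using hB_deriv_eq y hy
  have hderiv2 : deriv (deriv B) x = -4 / (1 + x) ^ 3 := by
    rw [Filter.EventuallyEq.deriv_eq hopen]
    exact (hB'_deriv x hx').deriv
  rw [hderiv2, hB_deriv_eq x hx']
  have h1x : (1:ℝ) - x ≠ 0 := by linarith
  have h1x2 : (1:ℝ) - x ^ 2 ≠ 0 := by
    have : (1:ℝ) - x ^ 2 = (1 - x) * (1 + x) := by ring
    rw [this]; exact mul_ne_zero h1x hx'
  simp only [B]
  field_simp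
  ring
end
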